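/- Let 1 ≤ n ≤ m and p ≥ 1, and write points of ℝᵐ as (x, x_e) ∈ ℝⁿ × ℝ^{m−n}. Let f_x: ℝᵐ → ℝⁿ, f_e: ℝᵐ → ℝ^{m−n} and h_a: ℝᵐ → ℝᵖ be C¹ with f_e(x, 0) = 0 for all x ∈ ℝⁿ, and define f: ℝⁿ → ℝⁿ by f(x) = f_x(x, 0) and h: ℝⁿ → ℝᵖ by h(x) = h_a(x, 0). Let P_a be a C¹ map from ℝᵐ to the real symmetric positive definite m×m matrices and write f_a = (f_x, f_e): ℝᵐ → ℝᵐ. Assume there exists q_a > 0 such that for every (x, x_e) ∈ ℝᵐ and every w ∈ ℝᵐ with Dh_a(x, x_e)·w = 0, one has (1/2)·(the directional derivative at (x, x_e) of the function (x′, x_e′) ↦ wᵀ·P_a(x′, x_e′)·w in the direction f_a(x, x_e)) + wᵀ·P_a(x, x_e)·Df_a(x, x_e)·w ≤ −q_a·wᵀ·P_a(x, x_e)·w. Define P(x) as the upper-left n×n block of P_a(x, 0). Then P(x) is symmetric positive definite for every x, and for every x ∈ ℝⁿ and every v ∈ ℝⁿ with Dh(x)·v = 0: (1/2)·(the directional derivative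 at x of the function x′ ↦ vᵀ·P(x′)·v in the direction f(x)) + vᵀ·P(x)·Df(x)·v ≤ −q_a·vᵀ·P(x)·v. -/

import Mathlib

open Matrix

/-- The linear embedding `x ↦ Sum.elim x 0`. -/
noncomputable def elimCLM (n k : ℕ) : ((Fin n → ℝ)) →L[ℝ] ((Fin n ⊕ Fin k) → ℝ) :=
  LinearMap.toContinuousLinearMap
    { toFun := fun x => Sum.elim x 0
      map_add' := by intro x y; ext (i | j) <;> simp
      map_smul' := by intro c x; ext (i | j) <;> simp }

lemma elimCLM_apply {n k : ℕ} (x : Fin n → ℝ) :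
    elimCLM n k x = Sum.elim x (0 : Fin k → ℝ) := rfl

lemma dot_elim {n k : ℕ} (A : Matrix (Fin n ⊕ Fin k) (Fin n ⊕ Fin k) ℝ)
    (v a : Fin n → ℝ) :
    (Sum.elim v (0 : Fin k → ℝ)) ⬝ᵥ A.mulVec (Sum.elim a (0 : Fin k → ℝ))
      = v ⬝ᵥ A.toBlocks₁₁.mulVec a := by
  simp [dotProduct, Matrix.mulVec, Fintype.sum_sum_type, Matrix.toBlocks₁₁]

theorem stmt_10 {n k p : ℕ} (hn : 1 ≤ n) (hp : 1 ≤ p)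
    (fx : ((Fin n ⊕ Fin k) → ℝ) → (Fin n → ℝ))
    (fe : ((Fin n ⊕ Fin k) → ℝ) → (Fin k → ℝ))
    (ha : ((Fin n ⊕ Fin k) → ℝ) → (Fin p → ℝ))
    (hfx : ContDiff ℝ 1 fx) (hfe : ContDiff ℝ 1 fe) (hha : ContDiff ℝ 1 ha)
    (hfe0 : ∀ x : Fin n → ℝ, fe (Sum.elim x (0 : Fin k → ℝ)) = 0)
    (Pa : ((Fin n ⊕ Fin k) → ℝ) → Matrix (Fin n ⊕ Fin k) (Fin n ⊕ Fin k) ℝ)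
    (hPac : ∀ a b, ContDiff ℝ 1 fun z => Pa z a b)
    (hPasym : ∀ z, (Pa z).IsSymm) (hPapos : ∀ z, (Pa z).PosDef)
    (qa : ℝ) (hqa : 0 < qa)
    (hyp : ∀ (z w : (Fin n ⊕ Fin k) → ℝ), fderiv ℝ ha z w = 0 →
      (1 / 2) * fderiv ℝ (fun z' => w ⬝ᵥ (Pa z').mulVec w) z (Sum.elim (fx z) (fe z))
          + w ⬝ᵥ (Pa z).mulVec (fderiv ℝ (fun z' => Sum.elim (fx z') (fe z')) z w)
        ≤ -qa * (w ⬝ᵥ (Pa z).mulVec w)) :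
    (∀ x : Fin n → ℝ,
        ((Pa (Sum.elim x (0 : Fin k → ℝ))).toBlocks₁₁).IsSymm ∧
        ((Pa (Sum.elim x (0 : Fin k → ℝ))).toBlocks₁₁).PosDef) ∧
    ∀ (x v : Fin n → ℝ),
      fderiv ℝ (fun x' : Fin n → ℝ => ha (Sum.elim x' (0 : Fin k → ℝ))) x v = 0 →
      (1 / 2) * fderiv ℝ
            (fun x' : Fin n → ℝ =>
              v ⬝ᵥ ((Pa (Sum.elim x' (0 : Fin k → ℝ))).toBlocks₁₁).mulVec v)
            x (fx (Sum.elim x (0 : Fin k → ℝ)))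
          + v ⬝ᵥ ((Pa (Sum.elim x (0 : Fin k → ℝ))).toBlocks₁₁).mulVec
              (fderiv ℝ (fun x' : Fin n → ℝ => fx (Sum.elim x' (0 : Fin k → ℝ))) x v)
        ≤ -qa * (v ⬝ᵥ ((Pa (Sum.elim x (0 : Fin k → ℝ))).toBlocks₁₁).mulVec v) := by
  set L := elimCLM n k with hL
  -- positivity and symmetry of the block
  constructor
  · intro x
    set z := Sum.elim x (0 : Fin k → ℝ)
    constructor
    · unfold Matrix.IsSymm
      ext i j
      have := congrFun (congrFun (hPasym z) (Sum.inl i)) (Sum.inl j)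
      simpa [Matrix.toBlocks₁₁, Matrix.transpose_apply] using this
    · refine Matrix.PosDef.of_dotProduct_mulVec_pos ?_ ?_
      · unfold Matrix.IsHermitian
        ext i j
        have := congrFun (congrFun (hPasym z) (Sum.inl i)) (Sum.inl j)
        simpa [Matrix.toBlocks₁₁, Matrix.conjTranspose_apply] using this
      · intro v hv
        have hw : (Sum.elim v (0 : Fin k → ℝ)) ≠ 0 := by
          intro h
          apply hv
          ext i
          have := congrFun h (Sum.inl i)
          simpa using this
        have := (hPapos z).dotProduct_mulVec_pos hw
        simpa [dot_elim] using this
  · intro x v hv0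
    set z := Sum.elim x (0 : Fin k → ℝ) with hz
    set w := Sum.elim v (0 : Fin k → ℝ) with hwdef
    have hLz : L x = z := rfl
    have hLw : L v = w := rfl
    have hfxd := hfx.differentiable one_ne_zero
    have hfed := hfe.differentiable one_ne_zero
    have hhad := hha.differentiable one_ne_zero
    -- differentiability of the quadratic form
    have hQ : ∀ (u : (Fin n ⊕ Fin k) → ℝ),
        Differentiable ℝ (fun z' => u ⬝ᵥ (Pa z').mulVec u) := by
      intro u
      have : (fun z' => u ⬝ᵥ (Pa z').mulVec u)
          = fun z' => ∑ i, u i * ∑ j, Pa z' i j * u j := by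
        funext z'
        simp [dotProduct, Matrix.mulVec]
      rw [this]
      apply Differentiable.fun_sum
      intro i _
      apply Differentiable.const_mul
      apply Differentiable.fun_sum
      intro j _
      exact ((hPac i j).differentiable one_ne_zero).mul_const _
    -- chain rule helper
    have chain : ∀ (g : ((Fin n ⊕ Fin k) → ℝ) → ℝ), DifferentiableAt ℝ g z →
        fderiv ℝ (fun x' => g (L x')) x = (fderiv ℝ g z).comp L := by
      intro g hg
      have := fderiv_comp (𝕜 := ℝ) x (by rwa [hLz]) L.differentiableAt
      rw [L.fderiv] at this
      exact this
    have chainV : ∀ (g : ((Fin n ⊕ Fin k) → ℝ) → (Fin p → ℝ)), DifferentiableAt ℝ g z →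
        fderiv ℝ (fun x' => g (L x')) x = (fderiv ℝ g z).comp L := by
      intro g hg
      have := fderiv_comp (𝕜 := ℝ) x (by rwa [hLz]) L.differentiableAt
      rw [L.fderiv] at this
      exact this
    -- Dh_a z w = 0
    have hDha : fderiv ℝ ha z w = 0 := by
      have := chainV ha (hhad z)
      have h2 : fderiv ℝ (fun x' : Fin n → ℝ => ha (Sum.elim x' (0 : Fin k → ℝ))) x v
          = fderiv ℝ ha z w := by
        rw [show (fun x' : Fin n → ℝ => ha (Sum.elim x' (0 : Fin k → ℝ)))
              = fun x' => ha (L x') from rfl, this]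
        rfl
      rw [← h2]; exact hv0
    have key := hyp z w hDha
    -- fe ∘ L = 0 hence its derivative is zero
    have hfeL : (fun x' : Fin n → ℝ => fe (L x')) = fun _ => (0 : Fin k → ℝ) := by
      funext x'
      exact hfe0 x'
    have hDfe : fderiv ℝ fe z w = 0 := by
      have h1 : fderiv ℝ (fun x' : Fin n → ℝ => fe (L x')) x = (fderiv ℝ fe z).comp L := by
        have := fderiv_comp (𝕜 := ℝ) x (show DifferentiableAt ℝ fe (L x) from hfed _)
          L.differentiableAt
        rw [L.fderiv] at this
        exact this
      have h2 : fderiv ℝ (fun x' : Fin n → ℝ => fe (L x')) x = 0 := by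
        rw [hfeL]; exact fderiv_const_apply _
      have := h1.symm.trans h2
      have := congrFun (congrArg DFunLike.coe this) v
      simpa [hLw] using this
    -- derivative of fa decomposed
    have hfa : DifferentiableAt ℝ (fun z' => Sum.elim (fx z') (fe z')) z := by
      apply differentiableAt_pi.2
      intro i
      cases i with
      | inl i => simpa using (differentiable_pi.1 (hfxd) i) z
      | inr j => simpa using (differentiable_pi.1 (hfed) j) z
    have hDfa : fderiv ℝ (fun z' => Sum.elim (fx z') (fe z')) z w
        = Sum.elim (fderiv ℝ fx z w) (0 : Fin k → ℝ) := by
      funext i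
      have hcomp : ∀ i, (fderiv ℝ (fun z' => Sum.elim (fx z') (fe z')) z w) i
          = fderiv ℝ (fun z' => Sum.elim (fx z') (fe z') i) z w := by
        intro i
        have h := fderiv_pi (𝕜 := ℝ) (φ := fun i z' => Sum.elim (fx z') (fe z') i) (x := z)
          (fun i => by
            cases i with
            | inl i => simpa using ((differentiable_pi.1 hfxd i) z)
            | inr j => simpa using ((differentiable_pi.1 hfed j) z))
        rw [h]; rfl
      cases i with
      | inl i =>
        rw [hcomp]
        have hx : fderiv ℝ fx z w i = fderiv ℝ (fun z' => fx z' i) z w := by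
          rw [fderiv_pi (fun i => (differentiable_pi.1 hfxd i) z)]; rfl
        simpa using hx.symm
      | inr j =>
        rw [hcomp]
        have hx : fderiv ℝ fe z w j = fderiv ℝ (fun z' => fe z' j) z w := by
          rw [fderiv_pi (fun j => (differentiable_pi.1 hfed j) z)]; rfl
        have := congrFun hDfe j
        simp only [Sum.elim_inr, Pi.zero_apply]
        rw [← hx] at *
        simpa using this
    -- derivative of fx ∘ L
    have hDfxL : fderiv ℝ (fun x' : Fin n → ℝ => fx (Sum.elim x' (0 : Fin k → ℝ))) x v
        = fderiv ℝ fx z w := by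
      have h1 : fderiv ℝ (fun x' : Fin n → ℝ => fx (L x')) x = (fderiv ℝ fx z).comp L := by
        have := fderiv_comp (𝕜 := ℝ) x (show DifferentiableAt ℝ fx (L x) from hfxd _)
          L.differentiableAt
        rw [L.fderiv] at this
        exact this
      have := congrFun (congrArg DFunLike.coe h1) v
      exact this
    -- the quadratic-form derivative
    have hQL : fderiv ℝ (fun x' : Fin n → ℝ =>
          v ⬝ᵥ ((Pa (Sum.elim x' (0 : Fin k → ℝ))).toBlocks₁₁).mulVec v)
        x (fx z)
        = fderiv ℝ (fun z' => w ⬝ᵥ (Pa z').mulVec w) z (Sum.elim (fx z) (fe z)) := by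
      have heq : (fun x' : Fin n → ℝ =>
          v ⬝ᵥ ((Pa (Sum.elim x' (0 : Fin k → ℝ))).toBlocks₁₁).mulVec v)
          = fun x' => (fun z' => w ⬝ᵥ (Pa z').mulVec w) (L x') := by
        funext x'
        exact (dot_elim _ v v).symm
      rw [heq, chain _ ((hQ w) z)]
      have : Sum.elim (fx z) (fe z) = L (fx z) := by
        rw [hfe0 x]; rfl
      rw [this]
      rfl
    -- middle term
    have hmid : v ⬝ᵥ ((Pa z).toBlocks₁₁).mulVec
          (fderiv ℝ (fun x' : Fin n → ℝ => fx (Sum.elim x' (0 : Fin k → ℝ))) x v)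
        = w ⬝ᵥ (Pa z).mulVec (fderiv ℝ (fun z' => Sum.elim (fx z') (fe z')) z w) := by
      rw [hDfxL, hDfa, hwdef, dot_elim]
    -- RHS
    have hrhs : v ⬝ᵥ ((Pa z).toBlocks₁₁).mulVec v = w ⬝ᵥ (Pa z).mulVec w := by
      rw [hwdef, dot_elim]
    rw [hQL, hmid, hrhs]
    exact key
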